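/- Suppose a matrix $M = [A\;I] \in \mathbb{C}^{m\times(n+p)}$ satisfies the 2-level weighted robust null space property of order $\bm{J}=(K,H)$ and scale $\lambda$ with constants $0 < \rho < 1$. Let $\bm{g} \in \mathbb{C}^{n+p}$ with $M\bm{g} = 0$, let $S \cup T$ be the quasi-best 2-level weighted support of $\bm{g}$ (with $\frac{3}{4}K \geq \|\bm{u}\|_\infty^2$ and $H \geq 2\|\bm{v}\|_\infty^2$), and set $\beta = \|\bm{g}_{(S\cup T)^c}\|_{1,\bm{w}_\lambda}/\sqrt{J_\lambda}$ with $J_\lambda = K + \lambda^2 H$ and $\Theta = \sqrt{J_\lambda}/\min\{\sqrt{K},\lambda\sqrt{H}\}$. Then $\|\bm{g}_{(S\cup T)^c}\|_2^2 \leq 4\rho\Theta\beta^2$ and consequently $\|\bm{g}\|_2 \leq \max\{\rho, 2\sqrt{\rho}\}(1 + \sqrt{\Theta})\,\beta$. -/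

import Mathlib

open scoped BigOperators

/-- Auxiliary tail bound: if `S` is a quasi-best weighted support of the nonnegative
vector `x` with weights `w ≥ 1`, `∑_S w² > K/4` by maximality, and `‖x_S‖₂ ≤ C`, then
`∑_{Sᶜ} x² ≤ (2C/√K) ∑_{Sᶜ} w x`. -/
lemma wladlasso_tail_aux {α : Type*} [Fintype α] [DecidableEq α] (w x : α → ℝ)
    (hw : ∀ i, 1 ≤ w i) (hx : ∀ i, 0 ≤ x i) (K C : ℝ) (hK : 0 < K) (hC : 0 ≤ C)
    (hKw : ∀ i, (w i) ^ 2 ≤ 3 / 4 * K)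
    (S : Finset α)
    (hSmax : ∀ i ∉ S, K < (∑ i' ∈ S, (w i') ^ 2) + (w i) ^ 2)
    (hSord : ∀ i ∈ S, ∀ i' ∉ S, x i' / w i' ≤ x i / w i)
    (hS2 : ∑ i ∈ S, (x i) ^ 2 ≤ C ^ 2) :
    ∑ i ∈ Sᶜ, (x i) ^ 2 ≤ 2 * C / Real.sqrt K * ∑ i ∈ Sᶜ, w i * x i := by
  rcases Sᶜ.eq_empty_or_nonempty with he | ⟨i₀, hi₀⟩
  · simp [he]
  · have hi₀S : i₀ ∉ S := Finset.mem_compl.mp hi₀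
    have hwpos : ∀ i, (0:ℝ) < w i := fun i => lt_of_lt_of_le one_pos (hw i)
    have hSne : S.Nonempty := by
      rcases S.eq_empty_or_nonempty with h | h
      · exfalso
        have h1 := hSmax i₀ hi₀S
        have h2 := hKw i₀
        rw [h] at h1
        simp at h1
        linarith
      · exact h
    obtain ⟨i₁, hi₁, hci⟩ := Finset.exists_mem_eq_inf' hSne (fun i => x i / w i)
    set c := S.inf' hSne (fun i => x i / w i) with hcdef
    have hc0 : 0 ≤ c := hci ▸ div_nonneg (hx i₁) (hwpos i₁).le
    have hsumw : K / 4 ≤ ∑ i ∈ S, (w i) ^ 2 := by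
      have h1 := hSmax i₀ hi₀S
      have h2 := hKw i₀
      linarith
    have hKc : K / 4 * c ^ 2 ≤ C ^ 2 := by
      have step : ∀ i ∈ S, (w i) ^ 2 * c ^ 2 ≤ (x i) ^ 2 := by
        intro i hi
        have h1 : c ≤ x i / w i := Finset.inf'_le _ hi
        have hwi := hwpos i
        have h2 : c * w i ≤ x i := by rwa [le_div_iff₀ hwi] at h1
        nlinarith [mul_nonneg hc0 hwi.le]
      calc K / 4 * c ^ 2 ≤ (∑ i ∈ S, (w i) ^ 2) * c ^ 2 :=
            mul_le_mul_of_nonneg_right hsumw (sq_nonneg c)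
        _ = ∑ i ∈ S, (w i) ^ 2 * c ^ 2 := by rw [Finset.sum_mul]
        _ ≤ ∑ i ∈ S, (x i) ^ 2 := Finset.sum_le_sum step
        _ ≤ C ^ 2 := hS2
    have hsK : 0 < Real.sqrt K := Real.sqrt_pos.2 hK
    have hcC : c ≤ 2 * C / Real.sqrt K := by
      rw [le_div_iff₀ hsK]
      have hsq : (c * Real.sqrt K) ^ 2 ≤ (2 * C) ^ 2 := by
        rw [mul_pow, Real.sq_sqrt hK.le]
        nlinarith
      exact (pow_le_pow_iff_left₀ (mul_nonneg hc0 hsK.le) (by linarith) two_ne_zero).mp hsq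
    have hterm : ∀ i ∈ Sᶜ, (x i) ^ 2 ≤ c * (w i * x i) := by
      intro i hi
      have hiS := Finset.mem_compl.mp hi
      have h1 : x i / w i ≤ c := hci ▸ hSord i₁ hi₁ i hiS
      have hwi := hwpos i
      have h2 : x i ≤ c * w i := by
        rw [div_le_iff₀ hwi] at h1
        linarith
      calc (x i) ^ 2 = x i * x i := sq (x i)
        _ ≤ (c * w i) * x i := mul_le_mul_of_nonneg_right h2 (hx i)
        _ = c * (w i * x i) := by ring
    calc ∑ i ∈ Sᶜ, (x i) ^ 2 ≤ ∑ i ∈ Sᶜ, c * (w i * x i) := Finset.sum_le_sum hterm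
      _ = c * ∑ i ∈ Sᶜ, w i * x i := by rw [Finset.mul_sum]
      _ ≤ 2 * C / Real.sqrt K * ∑ i ∈ Sᶜ, w i * x i :=
          mul_le_mul_of_nonneg_right hcC
            (Finset.sum_nonneg fun i _ => mul_nonneg (hwpos i).le (hx i))

set_option maxHeartbeats 1000000 in
/-- `ℓ²` tail bound in the WLAD-LASSO recovery analysis. For `M = [A I]` satisfying the
2-level weighted robust null space property of order `(K, H)` and scale `λ`, any `g` with
`M g = 0`, and `S ∪ T` the quasi-best 2-level weighted support of `g`, setting
`β = ‖g_{(S∪T)ᶜ}‖_{1,w_λ}/√J_λ` and `Θ = √J_λ / min(√K, λ√H)`, one has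
`‖g_{(S∪T)ᶜ}‖₂² ≤ 4ρΘβ²` and `‖g‖₂ ≤ max(ρ, 2√ρ)(1+√Θ)β`. -/
theorem wladlasso_l2_tail_bound {m n : ℕ} (A : Matrix (Fin m) (Fin n) ℂ)
    (u : Fin n → ℝ) (v : Fin m → ℝ)
    (hu : ∀ i, 1 ≤ u i) (hv : ∀ j, 1 ≤ v j)
    (K H lam ρ τ : ℝ) (hK : 0 < K) (hH : 0 < H) (hlam : 0 < lam)
    (hρ0 : 0 < ρ) (hρ1 : ρ < 1) (hτ : 0 < τ)
    (hKu : ∀ i, (u i) ^ 2 ≤ 3 / 4 * K)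
    (hHv : ∀ j, 2 * (v j) ^ 2 ≤ H)
    (hNSP : ∀ z : Fin n ⊕ Fin m → ℂ, ∀ S1 : Finset (Fin n), ∀ S2 : Finset (Fin m),
      (∑ i ∈ S1, (u i) ^ 2) ≤ K → (∑ j ∈ S2, (v j) ^ 2) ≤ H →
      Real.sqrt ((∑ i ∈ S1, ‖z (Sum.inl i)‖ ^ 2) + ∑ j ∈ S2, ‖z (Sum.inr j)‖ ^ 2) ≤
        ρ / Real.sqrt (K + lam ^ 2 * H) *
            ((∑ i ∈ S1ᶜ, u i * ‖z (Sum.inl i)‖) + lam * ∑ j ∈ S2ᶜ, v j * ‖z (Sum.inr j)‖)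
          + τ * Real.sqrt (∑ k, ‖((Matrix.fromCols A 1).mulVec z) k‖ ^ 2))
    (g : Fin n ⊕ Fin m → ℂ)
    (hg : (Matrix.fromCols A (1 : Matrix (Fin m) (Fin m) ℂ)).mulVec g = 0)
    (S : Finset (Fin n)) (T : Finset (Fin m))
    (hScard : (∑ i ∈ S, (u i) ^ 2) ≤ K)
    (hSmax : ∀ i ∉ S, K < (∑ i' ∈ S, (u i') ^ 2) + (u i) ^ 2)
    (hSord : ∀ i ∈ S, ∀ i' ∉ S, ‖g (Sum.inl i')‖ / u i' ≤ ‖g (Sum.inl i)‖ / u i)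
    (hTcard : (∑ j ∈ T, (v j) ^ 2) ≤ H)
    (hTmax : ∀ j ∉ T, H < (∑ j' ∈ T, (v j') ^ 2) + (v j) ^ 2)
    (hTord : ∀ j ∈ T, ∀ j' ∉ T, ‖g (Sum.inr j')‖ / v j' ≤ ‖g (Sum.inr j)‖ / v j) :
    (∑ i ∈ Sᶜ, ‖g (Sum.inl i)‖ ^ 2) + (∑ j ∈ Tᶜ, ‖g (Sum.inr j)‖ ^ 2) ≤
      4 * ρ * (Real.sqrt (K + lam ^ 2 * H) / min (Real.sqrt K) (lam * Real.sqrt H)) *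
        (((∑ i ∈ Sᶜ, u i * ‖g (Sum.inl i)‖) + lam * ∑ j ∈ Tᶜ, v j * ‖g (Sum.inr j)‖) /
            Real.sqrt (K + lam ^ 2 * H)) ^ 2 ∧
    Real.sqrt (∑ k, ‖g k‖ ^ 2) ≤
      max ρ (2 * Real.sqrt ρ) *
        (1 + Real.sqrt (Real.sqrt (K + lam ^ 2 * H) / min (Real.sqrt K) (lam * Real.sqrt H))) *
        (((∑ i ∈ Sᶜ, u i * ‖g (Sum.inl i)‖) + lam * ∑ j ∈ Tᶜ, v j * ‖g (Sum.inr j)‖) /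
          Real.sqrt (K + lam ^ 2 * H)) := by
  have hJ : 0 < K + lam ^ 2 * H := by positivity
  set sJ := Real.sqrt (K + lam ^ 2 * H) with hsJdef
  have hsJ : 0 < sJ := Real.sqrt_pos.2 hJ
  set AS := ∑ i ∈ Sᶜ, u i * ‖g (Sum.inl i)‖ with hASdef
  set AT := ∑ j ∈ Tᶜ, v j * ‖g (Sum.inr j)‖ with hATdef
  have hAS : 0 ≤ AS := Finset.sum_nonneg fun i _ =>
    mul_nonneg (le_trans zero_le_one (hu i)) (norm_nonneg _)
  have hAT : 0 ≤ AT := Finset.sum_nonneg fun j _ =>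
    mul_nonneg (le_trans zero_le_one (hv j)) (norm_nonneg _)
  set B := (AS + lam * AT) / sJ with hBdef
  have hB : 0 ≤ B := by
    rw [hBdef]
    positivity
  set μ := min (Real.sqrt K) (lam * Real.sqrt H) with hμdef
  have hμ0 : 0 < μ :=
    lt_min (Real.sqrt_pos.2 hK) (mul_pos hlam (Real.sqrt_pos.2 hH))
  -- main NSP inequality for g with the quasi-best support
  have hnsp := hNSP g S T hScard hTcard
  rw [hg] at hnsp
  simp only [Pi.zero_apply, norm_zero, ne_eq, OfNat.ofNat_ne_zero, not_false_eq_true,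
    zero_pow, Finset.sum_const_zero, Real.sqrt_zero, mul_zero, add_zero] at hnsp
  have hrhs : ρ / sJ * (AS + lam * AT) = ρ * B := by rw [hBdef]; ring
  rw [hrhs] at hnsp
  have hCB : 0 ≤ ρ * B := mul_nonneg hρ0.le hB
  have hXnn : (0:ℝ) ≤ (∑ i ∈ S, ‖g (Sum.inl i)‖ ^ 2) + ∑ j ∈ T, ‖g (Sum.inr j)‖ ^ 2 := by
    positivity
  have hmain : (∑ i ∈ S, ‖g (Sum.inl i)‖ ^ 2) + ∑ j ∈ T, ‖g (Sum.inr j)‖ ^ 2 ≤ (ρ * B) ^ 2 := by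
    calc (∑ i ∈ S, ‖g (Sum.inl i)‖ ^ 2) + ∑ j ∈ T, ‖g (Sum.inr j)‖ ^ 2
        = (Real.sqrt ((∑ i ∈ S, ‖g (Sum.inl i)‖ ^ 2) + ∑ j ∈ T, ‖g (Sum.inr j)‖ ^ 2)) ^ 2 :=
          (Real.sq_sqrt hXnn).symm
      _ ≤ (ρ * B) ^ 2 := pow_le_pow_left₀ (Real.sqrt_nonneg _) hnsp 2
  have hSnn : (0:ℝ) ≤ ∑ i ∈ S, ‖g (Sum.inl i)‖ ^ 2 := by positivity
  have hTnn : (0:ℝ) ≤ ∑ j ∈ T, ‖g (Sum.inr j)‖ ^ 2 := by positivity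
  -- the two tail bounds
  have hTailS : ∑ i ∈ Sᶜ, ‖g (Sum.inl i)‖ ^ 2 ≤ 2 * (ρ * B) / Real.sqrt K * AS := by
    exact wladlasso_tail_aux u (fun i => ‖g (Sum.inl i)‖) hu (fun i => norm_nonneg _)
      K (ρ * B) hK hCB hKu S hSmax hSord (by linarith)
  have hTailT : ∑ j ∈ Tᶜ, ‖g (Sum.inr j)‖ ^ 2 ≤ 2 * (ρ * B) / Real.sqrt H * AT := by
    exact wladlasso_tail_aux v (fun j => ‖g (Sum.inr j)‖) hv (fun j => norm_nonneg _)
      H (ρ * B) hH hCB (fun j => by have := hHv j; linarith) T hTmax hTord (by linarith)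
  have hμK : μ ≤ Real.sqrt K := min_le_left _ _
  have hμH : μ ≤ lam * Real.sqrt H := min_le_right _ _
  have h1 : 2 * (ρ * B) / Real.sqrt K * AS ≤ 2 * (ρ * B) / μ * AS := by
    gcongr
  have h2 : 2 * (ρ * B) / Real.sqrt H * AT ≤ 2 * (ρ * B) / μ * (lam * AT) := by
    have hsH : 0 < Real.sqrt H := Real.sqrt_pos.2 hH
    have heq : 2 * (ρ * B) / Real.sqrt H = 2 * (ρ * B) * lam / (lam * Real.sqrt H) := by
      rw [div_eq_div_iff (by positivity) (by positivity)]
      ring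
    calc 2 * (ρ * B) / Real.sqrt H * AT
        = 2 * (ρ * B) * lam / (lam * Real.sqrt H) * AT := by rw [heq]
      _ ≤ 2 * (ρ * B) * lam / μ * AT := by gcongr
      _ = 2 * (ρ * B) / μ * (lam * AT) := by ring
  have hASAT : AS + lam * AT = B * sJ := by
    rw [hBdef]
    field_simp
  have hpart1 : (∑ i ∈ Sᶜ, ‖g (Sum.inl i)‖ ^ 2) + (∑ j ∈ Tᶜ, ‖g (Sum.inr j)‖ ^ 2) ≤
      4 * ρ * (sJ / μ) * B ^ 2 := by
    have hc : 2 * (ρ * B) / μ * AS + 2 * (ρ * B) / μ * (lam * AT) = 2 * ρ * (sJ / μ) * B ^ 2 := by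
      have : 2 * (ρ * B) / μ * AS + 2 * (ρ * B) / μ * (lam * AT)
          = 2 * (ρ * B) / μ * (AS + lam * AT) := by ring
      rw [this, hASAT]
      ring
    have hpos : 0 ≤ ρ * (sJ / μ) * B ^ 2 := by positivity
    linarith
  refine ⟨hpart1, ?_⟩
  -- second part
  have hgsum : ∑ k, ‖g k‖ ^ 2 =
      ((∑ i ∈ S, ‖g (Sum.inl i)‖ ^ 2) + ∑ i ∈ Sᶜ, ‖g (Sum.inl i)‖ ^ 2) +
      ((∑ j ∈ T, ‖g (Sum.inr j)‖ ^ 2) + ∑ j ∈ Tᶜ, ‖g (Sum.inr j)‖ ^ 2) := by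
    rw [Fintype.sum_sum_type, ← Finset.sum_add_sum_compl S, ← Finset.sum_add_sum_compl T]
  set M := max ρ (2 * Real.sqrt ρ) with hMdef
  have hM0 : 0 ≤ M := le_trans hρ0.le (le_max_left _ _)
  have hΘ : 0 ≤ sJ / μ := div_nonneg hsJ.le hμ0.le
  set sΘ := Real.sqrt (sJ / μ) with hsΘdef
  have hsΘ : 0 ≤ sΘ := Real.sqrt_nonneg _
  have hsΘ2 : sΘ ^ 2 = sJ / μ := Real.sq_sqrt hΘ
  have hMρ : ρ ^ 2 ≤ M ^ 2 := pow_le_pow_left₀ hρ0.le (le_max_left _ _) 2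
  have hM4 : 4 * ρ ≤ M ^ 2 := by
    have h : (2 * Real.sqrt ρ) ^ 2 ≤ M ^ 2 :=
      pow_le_pow_left₀ (by positivity) (le_max_right _ _) 2
    have h2 : (2 * Real.sqrt ρ) ^ 2 = 4 * ρ := by
      rw [mul_pow, Real.sq_sqrt hρ0.le]
      ring
    linarith
  have hall : ∑ k, ‖g k‖ ^ 2 ≤ (M * (1 + sΘ) * B) ^ 2 := by
    have hRe : (M * (1 + sΘ) * B) ^ 2
        = M ^ 2 * B ^ 2 + 2 * (M ^ 2 * sΘ * B ^ 2) + M ^ 2 * (sΘ ^ 2 * B ^ 2) := by ring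
    have e1 : ρ ^ 2 * B ^ 2 ≤ M ^ 2 * B ^ 2 :=
      mul_le_mul_of_nonneg_right hMρ (sq_nonneg B)
    have e2 : 4 * ρ * (sΘ ^ 2 * B ^ 2) ≤ M ^ 2 * (sΘ ^ 2 * B ^ 2) :=
      mul_le_mul_of_nonneg_right hM4 (by positivity)
    have e3 : 0 ≤ M ^ 2 * sΘ * B ^ 2 := by positivity
    have hpart1' : (∑ i ∈ Sᶜ, ‖g (Sum.inl i)‖ ^ 2) + (∑ j ∈ Tᶜ, ‖g (Sum.inr j)‖ ^ 2) ≤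
        4 * ρ * (sΘ ^ 2 * B ^ 2) := by
      rw [hsΘ2]
      calc (∑ i ∈ Sᶜ, ‖g (Sum.inl i)‖ ^ 2) + (∑ j ∈ Tᶜ, ‖g (Sum.inr j)‖ ^ 2)
          ≤ 4 * ρ * (sJ / μ) * B ^ 2 := hpart1
        _ = 4 * ρ * (sJ / μ * B ^ 2) := by ring
    rw [hgsum, hRe]
    have hm' : (∑ i ∈ S, ‖g (Sum.inl i)‖ ^ 2) + ∑ j ∈ T, ‖g (Sum.inr j)‖ ^ 2
        ≤ ρ ^ 2 * B ^ 2 := by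
      have : (ρ * B) ^ 2 = ρ ^ 2 * B ^ 2 := by ring
      linarith [hmain]
    linarith
  have hR0 : 0 ≤ M * (1 + sΘ) * B := by positivity
  calc Real.sqrt (∑ k, ‖g k‖ ^ 2) ≤ Real.sqrt ((M * (1 + sΘ) * B) ^ 2) :=
        Real.sqrt_le_sqrt hall
    _ = M * (1 + sΘ) * B := Real.sqrt_sq hR0
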